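/- Let α ∈ (0,1) and let f : ℝ^d → ℝ be μ-strongly convex with minimizer x*. Suppose points x_k, x̂_k, x_{k+1} ∈ ℝ^d and step size η_k > 0 satisfy ‖x̂_k − x_k + η_k ∇f(x̂_k)‖ ≤ α‖x̂_k − x_k‖ and x_{k+1} = (1/(1+2η_k μ))(x_k − η_k ∇f(x̂_k)) + (2η_k μ/(1+2η_k μ)) x̂_k. Then ‖x_{k+1} − x*‖² ≤ ‖x_k − x*‖²/(1+2η_k μ). -/

import Mathlib

open InnerProductSpace Set

local notation "⟪" x ", " y "⟫" => @inner ℝ _ _ x y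

section Aux

variable {E : Type*} [NormedAddCommGroup E] [InnerProductSpace ℝ E] [CompleteSpace E]

/-- First-order condition for convex functions. -/
lemma convex_first_order {h : E → ℝ} {h' : E →L[ℝ] ℝ} {x y : E}
    (hc : ConvexOn ℝ univ h) (hd : HasFDerivAt h h' x) :
    h x + h' (y - x) ≤ h y := by
  have hline : HasDerivAt (fun t : ℝ => x + t • (y - x)) (y - x) 0 := by
    simpa using ((hasDerivAt_id (0:ℝ)).smul_const (y - x)).const_add x
  have hcomp : HasDerivAt (fun t : ℝ => h (x + t • (y - x))) (h' (y - x)) 0 := by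
    have hd' : HasFDerivAt h h' ((fun t : ℝ => x + t • (y - x)) 0) := by simpa using hd
    exact hd'.comp_hasDerivAt 0 hline
  have hφ : ConvexOn ℝ univ (fun t : ℝ => h (x + t • (y - x))) := by
    have := hc.comp_affineMap (AffineMap.lineMap x y : ℝ →ᵃ[ℝ] E)
    simp only [preimage_univ] at this
    refine this.congr fun t _ => ?_
    simp [AffineMap.lineMap_apply, add_comm]
  have hs := hφ.le_slope_of_hasDerivAt (mem_univ (0:ℝ)) (mem_univ (1:ℝ)) zero_lt_one hcomp
  rw [slope_def_field] at hs
  have h1 : x + (1:ℝ) • (y - x) = y := by rw [one_smul]; abel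
  have h0 : x + (0:ℝ) • (y - x) = x := by rw [zero_smul]; abel
  rw [h1, h0] at hs
  simp only [sub_zero, div_one] at hs
  linarith

/-- First-order condition for strongly convex functions. -/
lemma strong_first_order {μ : ℝ} {f : E → ℝ} {g x y : E}
    (hsc : StrongConvexOn univ μ f) (hd : HasGradientAt f g x) :
    f x + ⟪g, y - x⟫ + μ / 2 * ‖y - x‖ ^ 2 ≤ f y := by
  have hc : ConvexOn ℝ univ fun z => f z - μ / 2 * ‖z‖ ^ 2 :=
    strongConvexOn_iff_convex.mp hsc
  have h1 : HasFDerivAt (fun z : E => (⟪z, z⟫ : ℝ))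
      ((fderivInnerCLM ℝ (x, x)).comp ((ContinuousLinearMap.id ℝ E).prod
        (ContinuousLinearMap.id ℝ E))) x :=
    (hasFDerivAt_id x).inner ℝ (hasFDerivAt_id x)
  have h2 : HasFDerivAt (fun z : E => ‖z‖ ^ 2)
      ((fderivInnerCLM ℝ (x, x)).comp ((ContinuousLinearMap.id ℝ E).prod
        (ContinuousLinearMap.id ℝ E))) x := by
    refine h1.congr_of_eventuallyEq (Filter.Eventually.of_forall fun z => ?_)
    exact (real_inner_self_eq_norm_sq z).symm
  have h3 : HasFDerivAt (fun z : E => μ / 2 * ‖z‖ ^ 2)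
      ((μ / 2) • ((fderivInnerCLM ℝ (x, x)).comp ((ContinuousLinearMap.id ℝ E).prod
        (ContinuousLinearMap.id ℝ E)))) x := h2.const_mul (μ / 2)
  have hdf : HasFDerivAt f (toDual ℝ E g) x := hd
  have hh := convex_first_order (y := y) hc (hdf.sub h3)
  simp only [ContinuousLinearMap.sub_apply, ContinuousLinearMap.smul_apply,
    ContinuousLinearMap.coe_comp', Function.comp_apply, ContinuousLinearMap.prod_apply,
    ContinuousLinearMap.coe_id', id_eq, fderivInnerCLM_apply, toDual_apply_apply,
    smul_eq_mul] at hh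
  have hxy : (⟪x, y - x⟫ : ℝ) = ⟪y - x, x⟫ := real_inner_comm _ _
  have hexp : ‖y - x‖ ^ 2 = ‖y‖ ^ 2 - 2 * ⟪x, y - x⟫ - ‖x‖ ^ 2 := by
    rw [← real_inner_self_eq_norm_sq, ← real_inner_self_eq_norm_sq,
      ← real_inner_self_eq_norm_sq]
    simp only [inner_sub_left, inner_sub_right]
    rw [real_inner_comm y x]
    ring
  rw [← hxy] at hh
  rw [hexp]
  linarith [hh]

/-- Pure algebraic identity used in the contraction proof. -/
lemma key_identity (a b g : E) (η c : ℝ) (hc : c ≠ 0) :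
    c * ‖b - (1 / c) • (b - a + η • g)‖ ^ 2 =
      ‖a‖ ^ 2 - ‖b - a‖ ^ 2 + (1 / c) * ‖b - a + η • g‖ ^ 2
        - 2 * η * ⟪g, b⟫ + (c - 1) * ‖b‖ ^ 2 := by
  simp only [← real_inner_self_eq_norm_sq]
  simp only [inner_sub_left, inner_sub_right, inner_add_left, inner_add_right,
    real_inner_smul_left, real_inner_smul_right]
  rw [real_inner_comm b a, real_inner_comm g a, real_inner_comm g b]
  field_simp
  ring

end Aux

/-- One step of the (strongly convex) hybrid proximal extragradient
update contracts the distance to the minimizer by a factor `1/(1 + 2 η μ)`. -/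
theorem qnpe_one_step_contraction {d : ℕ} (μ α ηk : ℝ)
    (f : EuclideanSpace ℝ (Fin d) → ℝ)
    (gf : EuclideanSpace ℝ (Fin d) → EuclideanSpace ℝ (Fin d))
    (xstar xk xhk xk1 : EuclideanSpace ℝ (Fin d))
    (hμ : 0 < μ) (hα0 : 0 < α) (hα1 : α < 1) (hη : 0 < ηk)
    (hgrad : ∀ z, HasGradientAt f (gf z) z)
    (hsc : StrongConvexOn Set.univ μ f)
    (hmin : ∀ y, f xstar ≤ f y)
    (happrox : ‖xhk - xk + ηk • gf xhk‖ ≤ α * ‖xhk - xk‖)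
    (hupdate : xk1 = (1 / (1 + 2 * ηk * μ)) • (xk - ηk • gf xhk)
        + ((2 * ηk * μ) / (1 + 2 * ηk * μ)) • xhk) :
    ‖xk1 - xstar‖ ^ 2 ≤ ‖xk - xstar‖ ^ 2 / (1 + 2 * ηk * μ) := by
  set c : ℝ := 1 + 2 * ηk * μ with hcdef
  clear_value c
  have hc1 : 1 < c := by
    have : 0 < 2 * ηk * μ := by positivity
    linarith
  have hc0 : (0:ℝ) < c := by linarith
  have hcne : c ≠ 0 := ne_of_gt hc0
  -- gradient vanishes at the minimizer
  have hgstar : gf xstar = 0 := by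
    have hloc : IsLocalMin f xstar :=
      (isMinOn_univ_iff.mpr hmin).isLocalMin Filter.univ_mem
    have h0 : (toDual ℝ (EuclideanSpace ℝ (Fin d))) (gf xstar) = 0 :=
      hloc.hasFDerivAt_eq_zero (hgrad xstar)
    apply (toDual ℝ (EuclideanSpace ℝ (Fin d))).injective
    rw [h0, map_zero]
  -- strong monotonicity at the minimizer
  have key1 : μ * ‖xhk - xstar‖ ^ 2 ≤ ⟪gf xhk, xhk - xstar⟫ := by
    have h1 := strong_first_order hsc (hgrad xhk) (y := xstar)
    have h2 := strong_first_order hsc (hgrad xstar) (y := xhk)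
    rw [hgstar] at h2
    simp only [inner_zero_left] at h2
    have hn : ‖xstar - xhk‖ = ‖xhk - xstar‖ := norm_sub_rev _ _
    have hi : (⟪gf xhk, xstar - xhk⟫ : ℝ) = -⟪gf xhk, xhk - xstar⟫ := by
      rw [← inner_neg_right]
      congr 1
      abel
    rw [hn, hi] at h1
    linarith
  -- rewrite the update step
  have hx1 : xk1 - xstar
      = (xhk - xstar) - (1 / c) • (xhk - xk + ηk • gf xhk) := by
    rw [hupdate]
    have h2 : (2 * ηk * μ) / c = 1 - 1 / c := by
      field_simp
      rw [hcdef]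
      ring
    rw [h2]
    module
  have hid := key_identity (xk - xstar) (xhk - xstar) (gf xhk) ηk c hcne
  have hv : (xhk - xstar) - (xk - xstar) + ηk • gf xhk = xhk - xk + ηk • gf xhk := by
    module
  rw [hv] at hid
  have hw : xhk - xstar - (xk - xstar) = xhk - xk := by module
  rw [hw] at hid
  -- bounds
  have hE1 : ‖xhk - xk + ηk • gf xhk‖ ^ 2 ≤ (α * ‖xhk - xk‖) ^ 2 :=
    pow_le_pow_left₀ (norm_nonneg _) happrox 2
  have hα2 : α ^ 2 ≤ 1 := by nlinarith
  have hE2 : (α * ‖xhk - xk‖) ^ 2 ≤ ‖xhk - xk‖ ^ 2 := by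
    calc (α * ‖xhk - xk‖) ^ 2 = α ^ 2 * ‖xhk - xk‖ ^ 2 := by ring
      _ ≤ 1 * ‖xhk - xk‖ ^ 2 := mul_le_mul_of_nonneg_right hα2 (sq_nonneg _)
      _ = ‖xhk - xk‖ ^ 2 := one_mul _
  have h1c : (1 / c) * ‖xhk - xk + ηk • gf xhk‖ ^ 2
      ≤ ‖xhk - xk + ηk • gf xhk‖ ^ 2 := by
    have ha : 1 / c ≤ 1 := by rw [div_le_one hc0]; linarith
    nlinarith [sq_nonneg ‖xhk - xk + ηk • gf xhk‖]
  have hK : (c - 1) * ‖xhk - xstar‖ ^ 2 ≤ 2 * ηk * ⟪gf xhk, xhk - xstar⟫ := by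
    have h := mul_le_mul_of_nonneg_left key1 (by positivity : (0:ℝ) ≤ 2 * ηk)
    calc (c - 1) * ‖xhk - xstar‖ ^ 2 = 2 * ηk * (μ * ‖xhk - xstar‖ ^ 2) := by
          rw [hcdef]; ring
      _ ≤ 2 * ηk * ⟪gf xhk, xhk - xstar⟫ := h
  rw [hx1, le_div_iff₀ hc0]
  linarith [hid, hE1, hE2, h1c, hK]
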